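/- For odd n ≥ 5, let SC(n) be the probability distribution on simple graphs with vertex set {1,...,n} defined as follows: each vertex is independently and uniformly colored red or blue; since n is odd, exactly one of the two colors is chosen by an even number of vertices, and the output graph is the clique on the vertices of that color, with no other edges. Then SC(n) is matching independent but not edge-subgraph independent. -/

import Mathlib

open scoped Classical

noncomputable def pr {n : ℕ} (μ : SimpleGraph (Fin n) → ℝ) (P : SimpleGraph (Fin n) → Prop) : ℝ :=
  ∑ G : SimpleGraph (Fin n), if P G then μ G else 0

def IsDist {n : ℕ} (μ : SimpleGraph (Fin n) → ℝ) : Prop :=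
  (∀ G, 0 ≤ μ G) ∧ ∑ G : SimpleGraph (Fin n), μ G = 1

def IsMatchingSet {n : ℕ} (M : Finset (Sym2 (Fin n))) : Prop :=
  (∀ e ∈ M, ¬ e.IsDiag) ∧
    ∀ e ∈ M, ∀ f ∈ M, e ≠ f → ∀ v : Fin n, v ∈ e → v ∉ f

def MatchingIndep {n : ℕ} (μ : SimpleGraph (Fin n) → ℝ) : Prop :=
  ∀ M : Finset (Sym2 (Fin n)), IsMatchingSet M →
    ∀ S ⊆ M, pr μ (fun G => ∀ e ∈ S, e ∈ G.edgeSet)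
      = ∏ e ∈ S, pr μ (fun G => e ∈ G.edgeSet)

def EdgeSubgraphIndep {n : ℕ} (μ : SimpleGraph (Fin n) → ℝ) : Prop :=
  ∀ u v : Fin n, u ≠ v → ∀ W : Set (Fin n), u ∉ W → v ∉ W →
    ∀ H : SimpleGraph W,
      pr μ (fun G => G.induce W = H ∧ G.Adj u v)
        = pr μ (fun G => G.induce W = H) * pr μ (fun G => G.Adj u v)

def scGraph {n : ℕ} (c : Fin n → Bool) : SimpleGraph (Fin n) where
  Adj u v := u ≠ v ∧ c u = c v ∧ Even (Finset.univ.filter (fun w => c w = c u)).card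
  symm := by
    constructor
    rintro u v ⟨h1, h2, h3⟩
    refine ⟨h1.symm, h2.symm, ?_⟩
    simp only [← h2]
    exact h3
  loopless := ⟨fun u h => h.1 rfl⟩

noncomputable def SC (n : ℕ) : SimpleGraph (Fin n) → ℝ := fun G =>
  ((Finset.univ.filter (fun c : Fin n → Bool => scGraph c = G)).card : ℝ) / 2 ^ n

open Finset

lemma scGraph_adj {n : ℕ} (c : Fin n → Bool) (x y : Fin n) :
    (scGraph c).Adj x y ↔ x ≠ y ∧ c x = c y ∧ Even (Finset.univ.filter (fun w => c w = c x)).card :=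
  Iff.rfl

lemma pr_SC {n : ℕ} (P : SimpleGraph (Fin n) → Prop) :
    pr (SC n) P = ((Finset.univ.filter (fun c : Fin n → Bool => P (scGraph c))).card : ℝ) / 2 ^ n := by
  unfold pr SC
  rw [show (∑ G : SimpleGraph (Fin n), if P G then ((Finset.univ.filter (fun c : Fin n → Bool => scGraph c = G)).card : ℝ) / 2 ^ n else 0) = (∑ G : SimpleGraph (Fin n), (if P G then ((Finset.univ.filter (fun c : Fin n → Bool => scGraph c = G)).card : ℝ) else 0)) / 2 ^ n from by rw [Finset.sum_div]; exact Finset.sum_congr rfl fun G _ => by split <;> simp]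
  congr 1
  have key : ∀ G : SimpleGraph (Fin n),
      (if P G then ((Finset.univ.filter (fun c : Fin n → Bool => scGraph c = G)).card : ℝ) else 0)
        = ∑ c : Fin n → Bool, if scGraph c = G ∧ P (scGraph c) then (1:ℝ) else 0 := by
    intro G
    by_cases h : P G
    · rw [if_pos h, Finset.card_filter]
      push_cast
      refine Finset.sum_congr rfl fun c _ => ?_
      by_cases hc : scGraph c = G
      · simp [hc, h]
      · simp [hc]
    · rw [if_neg h]
      symm
      refine Finset.sum_eq_zero fun c _ => ?_
      rw [if_neg]
      rintro ⟨h1, h2⟩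
      exact h (h1 ▸ h2)
  rw [Finset.sum_congr rfl (fun G _ => key G), Finset.sum_comm]
  rw [Finset.card_filter]
  push_cast
  refine Finset.sum_congr rfl fun c _ => ?_
  by_cases hc : P (scGraph c)
  · rw [if_pos hc]
    rw [Finset.sum_eq_single (scGraph c)]
    · simp [hc]
    · intro G _ hG
      rw [if_neg]; rintro ⟨h1, _⟩; exact hG h1.symm
    · simp
  · rw [if_neg hc]
    exact Finset.sum_eq_zero fun G _ => by simp [hc]

lemma pr_SC' {n : ℕ} (P : SimpleGraph (Fin n) → Prop) (Q : (Fin n → Bool) → Prop)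
    (h : ∀ c, P (scGraph c) ↔ Q c) :
    pr (SC n) P = ((Finset.univ.filter Q).card : ℝ) / 2 ^ n := by
  rw [pr_SC, show Finset.univ.filter (fun c : Fin n → Bool => P (scGraph c)) = Finset.univ.filter Q
    from Finset.filter_congr fun c _ => by rw [h c]]

lemma class_split {n : ℕ} (T : Finset (Fin n)) (p : Fin n → Prop) [DecidablePred p] :
    (univ.filter p).card = (T.filter p).card + (Tᶜ.filter p).card := by
  rw [← Finset.card_union_of_disjoint, ← Finset.filter_union, Finset.union_compl]
  exact Finset.disjoint_filter_filter disjoint_compl_right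

lemma filter_tf {n : ℕ} (s : Finset (Fin n)) (c : Fin n → Bool) :
    (s.filter (fun w => c w = true)).card + (s.filter (fun w => c w = false)).card = s.card := by
  have := Finset.card_filter_add_card_filter_not (s := s) (p := fun w => c w = true)
  simpa using this

def Good {n : ℕ} (T : Finset (Fin n)) (c : Fin n → Bool) : Prop :=
  ∃ b, (∀ v ∈ T, c v = b) ∧ Even (Finset.univ.filter (fun w => c w = b)).card

def offc {n : ℕ} (T : Finset (Fin n)) (b : Bool) (c : Fin n → Bool) : ℕ :=
  (Tᶜ.filter (fun w => c w = b)).card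

def bstar {n : ℕ} (T : Finset (Fin n)) (c : Fin n → Bool) : Bool :=
  decide (Even (offc T true c))

def patch {n : ℕ} (T : Finset (Fin n)) (c : Fin n → Bool) : Fin n → Bool :=
  fun v => if v ∈ T then bstar T c else c v

lemma offc_sum {n : ℕ} (T : Finset (Fin n)) (c : Fin n → Bool) :
    offc T true c + offc T false c = Tᶜ.card := filter_tf _ c

lemma offc_congr {n : ℕ} (T : Finset (Fin n)) (b : Bool) {c d : Fin n → Bool}
    (h : ∀ v ∉ T, c v = d v) : offc T b c = offc T b d := by
  unfold offc
  exact congrArg Finset.card (Finset.filter_congr fun v hv => by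
    rw [Finset.mem_compl] at hv; rw [h v hv])

lemma bstar_even {n : ℕ} (hodd : Odd n) (T : Finset (Fin n)) (hT : Even T.card)
    (c : Fin n → Bool) : Even (offc T (bstar T c) c) := by
  have hcompl : T.card + Tᶜ.card = n := by simpa using Finset.card_add_card_compl T
  have hsum := offc_sum T c
  by_cases h : Even (offc T true c)
  · simp [bstar, h]
  · have h2 : Even (offc T false c) := by
      rcases hT with ⟨k, hk⟩; rcases hodd with ⟨m, hm⟩
      rw [Nat.even_iff] at h ⊢; omega
    simpa [bstar, h] using h2

lemma class_eq {n : ℕ} (T : Finset (Fin n)) (c : Fin n → Bool) (b : Bool)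
    (hb : ∀ v ∈ T, c v = b) :
    (univ.filter (fun w => c w = b)).card = T.card + offc T b c := by
  rw [class_split T]
  congr 1
  rw [Finset.filter_true_of_mem hb]

lemma bstar_good {n : ℕ} (hodd : Odd n) (T : Finset (Fin n)) (hT : Even T.card)
    (g : Fin n → Bool) (b : Bool) (hb : ∀ v ∈ T, g v = b)
    (he : Even (univ.filter (fun w => g w = b)).card) : bstar T g = b := by
  rw [class_eq T g b hb] at he
  have hoffb : Even (offc T b g) := by
    rcases hT with ⟨k, hk⟩; rw [Nat.even_iff] at he ⊢; omega
  have hcompl : T.card + Tᶜ.card = n := by simpa using Finset.card_add_card_compl T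
  have hsum := offc_sum T g
  cases b
  · have hodd' : ¬ Even (offc T true g) := by
      rcases hT with ⟨k, hk⟩; rcases hodd with ⟨m, hm⟩
      rw [Nat.even_iff] at hoffb ⊢; omega
    simp [bstar, hodd']
  · simp [bstar, hoffb]

lemma good_count {n : ℕ} (hodd : Odd n) (T : Finset (Fin n)) (hT : Even T.card) :
    (univ.filter (fun c : Fin n → Bool => Good T c)).card * 2 ^ T.card = 2 ^ n := by
  classical
  have hgood : ∀ c : Fin n → Bool, patch T c ∈ univ.filter (fun c => Good T c) := by
    intro c
    simp only [mem_filter, mem_univ, true_and]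
    have hmem : ∀ v ∈ T, patch T c v = bstar T c := fun v hv => by simp [patch, hv]
    refine ⟨bstar T c, hmem, ?_⟩
    rw [class_eq T _ _ hmem, offc_congr T _ (fun v hv => by simp [patch, hv] : ∀ v ∉ T, patch T c v = c v)]
    exact hT.add (bstar_even hodd T hT c)
  have hfiber : ∀ g ∈ univ.filter (fun c : Fin n → Bool => Good T c),
      (univ.filter (fun c => patch T c = g)).card = 2 ^ T.card := by
    intro g hg
    rw [mem_filter] at hg
    obtain ⟨-, b, hb1, hb2⟩ := hg
    have hbg : bstar T g = b := bstar_good hodd T hT g b hb1 hb2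
    have hiff : ∀ c : Fin n → Bool, patch T c = g ↔ ∀ v ∉ T, c v = g v := by
      intro c
      constructor
      · intro h v hv
        have := congrFun h v
        simpa [patch, hv] using this
      · intro h
        have hbc : bstar T c = b := by
          unfold bstar
          rw [offc_congr T true h]
          rw [← hbg]
          rfl
        funext v
        by_cases hv : v ∈ T
        · simp [patch, hv, hbc, hb1 v hv]
        · simp [patch, hv, h v hv]
    have hset : univ.filter (fun c : Fin n → Bool => patch T c = g)
        = univ.filter (fun c => ∀ v ∉ T, c v = g v) :=
      Finset.filter_congr fun c _ => by rw [hiff c]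
    rw [hset]
    have hcard : (univ.filter (fun c : Fin n → Bool => ∀ v ∉ T, c v = g v)).card
        = (univ : Finset (↥T → Bool)).card := by
      apply Finset.card_bij' (i := fun c _ => fun v : ↥T => c v)
        (j := fun d _ => fun v => if h : v ∈ T then d ⟨v, h⟩ else g v)
      · intro c _; exact mem_univ _
      · intro d _
        simp only [mem_filter, mem_univ, true_and]
        intro v hv
        simp [hv]
      · intro c hc
        rw [mem_filter] at hc
        funext v
        by_cases hv : v ∈ T
        · simp [hv]
        · simp [hv, hc.2 v hv]
      · intro d _
        funext v
        simp [v.2]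
    rw [hcard, Finset.card_univ, Fintype.card_fun, Fintype.card_coe, Fintype.card_bool]
  rw [← Finset.sum_const_nat hfiber, ← Finset.card_eq_sum_card_fiberwise (fun c _ => hgood c),
    Finset.card_univ, Fintype.card_fun, Fintype.card_bool, Fintype.card_fin]

lemma exists_even_class {n : ℕ} (hodd : Odd n) (c : Fin n → Bool) :
    ∃ b, Even (univ.filter (fun w => c w = b)).card := by
  have h := filter_tf (univ : Finset (Fin n)) c
  rw [Finset.card_univ, Fintype.card_fin] at h
  rcases Nat.even_or_odd (univ.filter (fun w => c w = true)).card with he | ho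
  · exact ⟨true, he⟩
  · refine ⟨false, ?_⟩
    rcases hodd with ⟨m, hm⟩
    rw [Nat.odd_iff] at ho
    rw [Nat.even_iff]
    omega

lemma even_class_unique {n : ℕ} (hodd : Odd n) (c : Fin n → Bool) {b b' : Bool}
    (h : Even (univ.filter (fun w => c w = b)).card)
    (h' : Even (univ.filter (fun w => c w = b')).card) : b = b' := by
  by_contra hne
  have hs := filter_tf (univ : Finset (Fin n)) c
  rw [Finset.card_univ, Fintype.card_fin] at hs
  rcases hodd with ⟨m, hm⟩
  cases b <;> cases b' <;> simp_all <;>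
    (rw [Nat.even_iff] at h h'; omega)

def coverT {n : ℕ} (S : Finset (Sym2 (Fin n))) : Finset (Fin n) :=
  S.biUnion (fun e => univ.filter (· ∈ e))

lemma mem_coverT {n : ℕ} (S : Finset (Sym2 (Fin n))) (v : Fin n) :
    v ∈ coverT S ↔ ∃ e ∈ S, v ∈ e := by simp [coverT]

lemma filter_mem_sym2 {n : ℕ} (e : Sym2 (Fin n)) (he : ¬ e.IsDiag) :
    ((univ : Finset (Fin n)).filter (· ∈ e)).card = 2 := by
  induction e using Sym2.ind with
  | _ x y =>
    rw [Sym2.mk_isDiag_iff] at he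
    have : (univ : Finset (Fin n)).filter (· ∈ s(x, y)) = {x, y} := by
      ext v
      simp [Sym2.mem_iff]
    rw [this, Finset.card_insert_of_notMem (by simp [he]), Finset.card_singleton]

lemma coverT_card {n : ℕ} (S : Finset (Sym2 (Fin n))) (h1 : ∀ e ∈ S, ¬ e.IsDiag)
    (h2 : ∀ e ∈ S, ∀ f ∈ S, e ≠ f → ∀ v : Fin n, v ∈ e → v ∉ f) :
    (coverT S).card = 2 * S.card := by
  rw [coverT, Finset.card_biUnion]
  · rw [Finset.sum_congr rfl (fun e he => filter_mem_sym2 e (h1 e he)), Finset.sum_const,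
      smul_eq_mul, mul_comm]
  · intro e he f hf hef
    rw [Function.onFun, Finset.disjoint_filter]
    intro v _ hv
    exact h2 e he f hf hef v hv

lemma event_iff_good {n : ℕ} (hodd : Odd n) (S : Finset (Sym2 (Fin n)))
    (h1 : ∀ e ∈ S, ¬ e.IsDiag) (c : Fin n → Bool) :
    (∀ e ∈ S, e ∈ (scGraph c).edgeSet) ↔ Good (coverT S) c := by
  constructor
  · intro h
    obtain ⟨b, hb⟩ := exists_even_class hodd c
    refine ⟨b, ?_, hb⟩
    intro v hv
    rw [mem_coverT] at hv
    obtain ⟨e, heS, hve⟩ := hv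
    have he := h e heS
    revert hve he
    induction e using Sym2.ind with
    | _ x y =>
      intro hve he
      rw [SimpleGraph.mem_edgeSet, scGraph_adj] at he
      obtain ⟨-, hxy, hev⟩ := he
      have hcx : c x = b := even_class_unique hodd c hev hb
      rcases Sym2.mem_iff.mp hve with rfl | rfl
      · exact hcx
      · rw [← hxy]; exact hcx
  · rintro ⟨b, hb1, hb2⟩ e heS
    have hne := h1 e heS
    revert hne heS
    induction e using Sym2.ind with
    | _ x y =>
      intro heS hne
      rw [Sym2.mk_isDiag_iff] at hne
      have hx : x ∈ coverT S := (mem_coverT S x).2 ⟨_, heS, by simp⟩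
      have hy : y ∈ coverT S := (mem_coverT S y).2 ⟨_, heS, by simp⟩
      rw [SimpleGraph.mem_edgeSet, scGraph_adj]
      refine ⟨hne, by rw [hb1 x hx, hb1 y hy], ?_⟩
      rw [hb1 x hx]
      exact hb2

lemma count_div {n k a : ℕ} (ha : a * 2 ^ (2 * k) = 2 ^ n) :
    (a : ℝ) / 2 ^ n = (1 / 4) ^ k := by
  have h2n : (2:ℝ) ^ n ≠ 0 := by positivity
  have key : (a : ℝ) * 4 ^ k = 2 ^ n := by
    have := congrArg (fun x : ℕ => (x : ℝ)) ha
    push_cast at this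
    rw [show (4:ℝ) ^ k = 2 ^ (2 * k) by rw [pow_mul]; norm_num]
    exact this
  rw [div_eq_iff h2n]
  rw [div_pow, one_pow, div_mul_eq_mul_div, one_mul, eq_div_iff (by positivity)]
  linarith [key]

lemma matching_indep {n : ℕ} (hodd : Odd n) : MatchingIndep (SC n) := by
  intro M hM S hS
  have h1 : ∀ e ∈ S, ¬ e.IsDiag := fun e he => hM.1 e (hS he)
  have h2 : ∀ e ∈ S, ∀ f ∈ S, e ≠ f → ∀ v : Fin n, v ∈ e → v ∉ f :=
    fun e he f hf => hM.2 e (hS he) f (hS hf)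
  have hTe : Even (coverT S).card := by rw [coverT_card S h1 h2]; exact even_two_mul _
  have hcount := good_count hodd (coverT S) hTe
  rw [coverT_card S h1 h2] at hcount
  rw [pr_SC' _ (fun c => Good (coverT S) c) (fun c => event_iff_good hodd S h1 c)]
  have hedge : ∀ e ∈ S, pr (SC n) (fun G => e ∈ G.edgeSet) = 1 / 4 := by
    intro e he
    have h1' : ∀ f ∈ ({e} : Finset (Sym2 (Fin n))), ¬ f.IsDiag := by
      intro f hf; rw [Finset.mem_singleton.mp hf]; exact h1 e he
    rw [pr_SC' _ (fun c => Good (coverT {e}) c) (fun c => by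
      show e ∈ (scGraph c).edgeSet ↔ Good (coverT {e}) c
      rw [← event_iff_good hodd {e} h1' c]
      simp)]
    have h2' : ∀ a ∈ ({e} : Finset (Sym2 (Fin n))), ∀ b ∈ ({e} : Finset (Sym2 (Fin n))),
        a ≠ b → ∀ v : Fin n, v ∈ a → v ∉ b := by
      intro a ha b hb hab
      rw [Finset.mem_singleton] at ha hb
      subst ha; subst hb; exact absurd rfl hab
    have hTe' : Even (coverT {e}).card := by rw [coverT_card _ h1' h2']; exact even_two_mul _
    have hc := good_count hodd (coverT {e}) hTe'
    rw [coverT_card _ h1' h2', Finset.card_singleton] at hc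
    simpa using count_div hc
  rw [Finset.prod_congr rfl hedge, Finset.prod_const]
  exact count_div hcount

set_option maxHeartbeats 1000000 in
lemma not_esi {n : ℕ} (hodd : Odd n) (hn : 5 ≤ n) : ¬ EdgeSubgraphIndep (SC n) := by
  intro h
  set u : Fin n := ⟨0, by omega⟩ with hu_def
  set v : Fin n := ⟨1, by omega⟩ with hv_def
  set w1 : Fin n := ⟨2, by omega⟩ with hw1_def
  set w2 : Fin n := ⟨3, by omega⟩ with hw2_def
  have huv : u ≠ v := by simp [hu_def, hv_def, Fin.ext_iff]
  set W : Set (Fin n) := {x | x ≠ u ∧ x ≠ v} with hW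
  have hu : u ∉ W := by simp [hW]
  have hv : v ∉ W := by simp [hW]
  have hspec := h u v huv W hu hv ⊤
  have hw1W : w1 ∈ W := by
    constructor <;> simp [hu_def, hv_def, hw1_def, Fin.ext_iff]
  have hw2W : w2 ∈ W := by
    constructor <;> simp [hu_def, hv_def, hw2_def, Fin.ext_iff]
  have hw12 : w1 ≠ w2 := by simp [hw1_def, hw2_def, Fin.ext_iff]
  -- the joint probability is zero
  have hjoint : pr (SC n) (fun G => G.induce W = ⊤ ∧ G.Adj u v) = 0 := by
    rw [pr_SC' _ (fun _ => False)]
    · simp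
    · intro c
      simp only [iff_false]
      rintro ⟨hind, hadj⟩
      rw [scGraph_adj] at hadj
      obtain ⟨-, hcuv, hevu⟩ := hadj
      have hAdjW : ∀ a b : Fin n, (ha : a ∈ W) → (hb : b ∈ W) → a ≠ b → (scGraph c).Adj a b := by
        intro a b ha hb hab
        have h2 : ((scGraph c).induce W).Adj ⟨a, ha⟩ ⟨b, hb⟩ := by
          rw [hind]
          simp [Subtype.ext_iff, hab]
        simpa using h2
      have hev1 : Even (univ.filter (fun w => c w = c w1)).card :=
        ((scGraph_adj c w1 w2).mp (hAdjW w1 w2 hw1W hw2W hw12)).2.2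
      have hcb : c u = c w1 := even_class_unique hodd c hevu hev1
      have hall : ∀ x : Fin n, c x = c u := by
        intro x
        by_cases hx1 : x = u
        · rw [hx1]
        · by_cases hx2 : x = v
          · rw [hx2, ← hcuv]
          · have hxW : x ∈ W := ⟨hx1, hx2⟩
            by_cases hxw1 : x = w1
            · rw [hxw1, hcb]
            · have h3 := (scGraph_adj c x w1).mp (hAdjW x w1 hxW hw1W hxw1)
              rw [h3.2.1, ← hcb]
      have h4 : (univ.filter (fun w => c w = c u)) = univ :=
        Finset.filter_true_of_mem (fun x _ => hall x)
      rw [h4, Finset.card_univ, Fintype.card_fin] at hevu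
      rcases hodd with ⟨m, hm⟩
      rw [Nat.even_iff] at hevu
      omega
  -- each factor is positive
  have hpos1 : 0 < pr (SC n) (fun G => G.induce W = ⊤) := by
    rw [pr_SC]
    apply div_pos _ (by positivity)
    have hcard : 0 < (univ.filter (fun c : Fin n → Bool => (scGraph c).induce W = ⊤)).card := by
      rw [Finset.card_pos]
      refine ⟨fun x => decide (x = v), ?_⟩
      rw [mem_filter]
      refine ⟨mem_univ _, ?_⟩
      set c : Fin n → Bool := fun x => decide (x = v) with hc
      have hclsW : (univ.filter (fun w => c w = false)).card = n - 1 := by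
        have : univ.filter (fun w => c w = false) = univ.erase v := by
          ext w
          simp [hc, Finset.mem_erase]
        rw [this, Finset.card_erase_of_mem (mem_univ v), Finset.card_univ, Fintype.card_fin]
      have hevW : Even (univ.filter (fun w => c w = false)).card := by
        rw [hclsW]
        rcases hodd with ⟨m, hm⟩
        rw [Nat.even_iff]; omega
      ext a b
      simp only [SimpleGraph.top_adj]
      constructor
      · exact fun had => had.ne
      · intro hab
        have hvala : c a.val = false := by
          simp [hc, a.2.2]
        have hvalb : c b.val = false := by
          simp [hc, b.2.2]
        have : (scGraph c).Adj a.val b.val := by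
          rw [scGraph_adj]
          refine ⟨fun hh => hab (Subtype.ext hh), by rw [hvala, hvalb], ?_⟩
          rw [hvala]
          exact hevW
        simpa using this
    exact_mod_cast hcard
  have hpos2 : 0 < pr (SC n) (fun G => G.Adj u v) := by
    rw [pr_SC]
    apply div_pos _ (by positivity)
    have hcard : 0 < (univ.filter (fun c : Fin n → Bool => (scGraph c).Adj u v)).card := by
      rw [Finset.card_pos]
      refine ⟨fun x => decide (x = u ∨ x = v), ?_⟩
      rw [mem_filter]
      refine ⟨mem_univ _, ?_⟩
      set c : Fin n → Bool := fun x => decide (x = u ∨ x = v) with hc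
      have hcls : univ.filter (fun w => c w = true) = {u, v} := by
        ext w
        simp [hc]
      rw [scGraph_adj]
      refine ⟨huv, by simp [hc], ?_⟩
      have hcu : c u = true := by simp [hc]
      rw [hcu, hcls, Finset.card_insert_of_notMem (by simp [huv]), Finset.card_singleton]
      exact even_two
    exact_mod_cast hcard
  rw [hjoint] at hspec
  exact absurd hspec.symm (ne_of_gt (mul_pos hpos1 hpos2))

theorem SC_matching_not_edge_subgraph (n : ℕ) (hodd : Odd n) (hn : 5 ≤ n) :
    MatchingIndep (SC n) ∧ ¬ EdgeSubgraphIndep (SC n) := by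
  exact ⟨matching_indep hodd, not_esi hodd hn⟩
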